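/- arXiv:1711.01449 — 2 statements merged into one kernel-verified Lean document; each statement's English description precedes it below -/
import Mathlib

section
/- For the function ρ(x) = 1 − min(x, 1/e)^{min(x, 1/e)} defined for x ≥ 0, ρ is nondecreasing, continuous, concave, ρ(0) = 0, and ∫_{0^+} dx/ρ(x) = ∞ (i.e., for every ε > 0 the integral ∫_0^ε dx/ρ(x) diverges). -/
open MeasureTheory Set

private noncomputable def cC : ℝ := (Real.exp 1)⁻¹
private noncomputable def gG : ℝ → ℝ := fun m => 1 - Real.exp (m * Real.log m)

private lemma hc0 : (0:ℝ) < cC := by unfold cC; positivity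

private lemma hc1 : cC < 1 := by
  unfold cC
  have h : (1:ℝ) < Real.exp 1 := by
    have := Real.exp_lt_exp.mpr (one_pos (α := ℝ)); simpa using this
  rw [inv_lt_one_iff₀]; right; exact h

private lemma hlogc : Real.log cC = -1 := by
  unfold cC; rw [Real.log_inv, Real.log_exp]

private lemma h_anti : AntitoneOn (fun m => m * Real.log m) (Icc 0 cC) := by
  apply antitoneOn_of_deriv_nonpos (convex_Icc 0 cC)
    Real.continuous_mul_log.continuousOn
  · intro m hm
    rw [interior_Icc] at hm
    exact (Real.hasDerivAt_mul_log hm.1.ne').differentiableAt.differentiableWithinAt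
  · intro m hm
    rw [interior_Icc] at hm
    rw [(Real.hasDerivAt_mul_log hm.1.ne').deriv]
    have : Real.log m < Real.log cC := Real.log_lt_log hm.1 hm.2
    rw [hlogc] at this; linarith

private lemma g_mono : MonotoneOn gG (Icc 0 cC) := by
  intro x hx y hy hxy
  have := h_anti hx hy hxy
  simp only [gG]
  have := Real.exp_le_exp.2 this
  linarith

private lemma g_cont : Continuous gG :=
  continuous_const.sub (Real.continuous_exp.comp Real.continuous_mul_log)

private lemma g_hasDeriv {m : ℝ} (hm : m ≠ 0) :
    HasDerivAt gG (-(Real.exp (m * Real.log m) * (Real.log m + 1))) m :=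
  ((Real.hasDerivAt_mul_log hm).exp).const_sub 1

private lemma g_concave : ConcaveOn ℝ (Icc 0 cC) gG := by
  apply AntitoneOn.concaveOn_of_deriv (convex_Icc 0 cC) g_cont.continuousOn
  · intro m hm
    rw [interior_Icc] at hm
    exact (g_hasDeriv hm.1.ne').differentiableAt.differentiableWithinAt
  · rw [interior_Icc]
    intro x hx y hy hxy
    rw [(g_hasDeriv hx.1.ne').deriv, (g_hasDeriv hy.1.ne').deriv]
    have hEx : Real.exp (y * Real.log y) ≤ Real.exp (x * Real.log x) :=
      Real.exp_le_exp.2 (h_anti (Ioo_subset_Icc_self hx) (Ioo_subset_Icc_self hy) hxy)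
    have hlx : Real.log x < -1 := by
      have := Real.log_lt_log hx.1 hx.2; rwa [hlogc] at this
    have hly : Real.log y < -1 := by
      have := Real.log_lt_log hy.1 hy.2; rwa [hlogc] at this
    have hlxy : Real.log x ≤ Real.log y := Real.log_le_log hx.1 hxy
    have h1 : -(Real.exp (y * Real.log y) * (Real.log y + 1))
        = Real.exp (y * Real.log y) * (-(Real.log y) - 1) := by ring
    have h2 : -(Real.exp (x * Real.log x) * (Real.log x + 1))
        = Real.exp (x * Real.log x) * (-(Real.log x) - 1) := by ring
    rw [h1, h2]
    apply mul_le_mul hEx (by linarith) (by linarith) (Real.exp_pos _).le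

private lemma rho_eq (ρ : ℝ → ℝ)
    (hρ : ∀ x, ρ x = 1 - (min x (Real.exp 1)⁻¹) ^ (min x (Real.exp 1)⁻¹)) :
    ∀ x ∈ Ici (0:ℝ), ρ x = gG (min x cC) := by
  intro x hx
  rw [hρ]
  show 1 - (min x cC) ^ (min x cC) = gG (min x cC)
  rcases eq_or_lt_of_le (le_min hx hc0.le) with h | h
  · rw [← h]
    simp [gG]
  · rw [Real.rpow_def_of_pos h]
    simp [gG, mul_comm]

private lemma min_mem (x : ℝ) (hx : x ∈ Ici (0:ℝ)) : min x cC ∈ Icc 0 cC :=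
  ⟨le_min hx hc0.le, min_le_right _ _⟩

private noncomputable def FF : ℝ → ℝ := fun x => -Real.log (-Real.log x)

private lemma FF_deriv {x : ℝ} (hx : 0 < x) (hx1 : x < 1) :
    HasDerivAt FF (-(x * Real.log x)⁻¹) x := by
  have hlog : Real.log x < 0 := Real.log_neg hx hx1
  have h1 : HasDerivAt (fun y => -Real.log y) (-x⁻¹) x :=
    (Real.hasDerivAt_log hx.ne').neg
  have h2 : HasDerivAt Real.log (-Real.log x)⁻¹ (-Real.log x) :=
    Real.hasDerivAt_log (by linarith)
  have h3 : HasDerivAt (fun y => Real.log (-Real.log y)) ((-Real.log x)⁻¹ * (-x⁻¹)) x :=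
    by have h := h2.comp x h1; exact h
  have := h3.neg
  rw [show -(x * Real.log x)⁻¹ = -((-Real.log x)⁻¹ * -x⁻¹) by rw [mul_inv, inv_neg]; ring]
  exact this

private lemma phi_le (ρ : ℝ → ℝ)
    (hρ : ∀ x, ρ x = 1 - (min x (Real.exp 1)⁻¹) ^ (min x (Real.exp 1)⁻¹))
    {x : ℝ} (hx : 0 < x) (hxc : x ≤ cC) :
    0 < -(x * Real.log x)⁻¹ ∧ -(x * Real.log x)⁻¹ ≤ 1 / ρ x ∧ 0 < ρ x := by
  have hx1 : x < 1 := lt_of_le_of_lt hxc hc1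
  have hlog : Real.log x < 0 := Real.log_neg hx hx1
  have hxl : x * Real.log x < 0 := mul_neg_of_pos_of_neg hx hlog
  have hmin : min x (Real.exp 1)⁻¹ = x := min_eq_left hxc
  have hval : ρ x = 1 - Real.exp (x * Real.log x) := by
    rw [hρ, hmin, Real.rpow_def_of_pos hx, mul_comm]
  have hρpos : 0 < ρ x := by
    rw [hval]
    have : Real.exp (x * Real.log x) < 1 := Real.exp_lt_one_iff.mpr hxl
    linarith
  have hub : ρ x ≤ -(x * Real.log x) := by
    rw [hval]
    have := Real.add_one_le_exp (x * Real.log x)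
    linarith
  refine ⟨by rw [← inv_neg]; exact inv_pos.mpr (by linarith), ?_, hρpos⟩
  rw [one_div]
  rw [show -(x * Real.log x)⁻¹ = (-(x * Real.log x))⁻¹ by rw [← inv_neg]]
  exact inv_anti₀ hρpos hub

private lemma rho_not_integrable (ρ : ℝ → ℝ)
    (hρ : ∀ x, ρ x = 1 - (min x (Real.exp 1)⁻¹) ^ (min x (Real.exp 1)⁻¹)) :
    ∀ ε > (0 : ℝ), ¬ IntegrableOn (fun x => 1 / ρ x) (Ioc (0 : ℝ) ε) := by
  intro ε hε hInt
  set a : ℝ := min ε cC with ha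
  have ha0 : 0 < a := lt_min hε hc0
  have hac : a ≤ cC := min_le_right _ _
  have ha1 : a < 1 := lt_of_le_of_lt hac hc1
  set φ : ℝ → ℝ := fun x => -(x * Real.log x)⁻¹ with hφ
  have hInt' : IntegrableOn (fun x => 1 / ρ x) (Ioc 0 a) :=
    hInt.mono_set (Ioc_subset_Ioc_right (min_le_left _ _))
  -- φ is integrable on Ioc 0 a by comparison
  have hφmeas : AEStronglyMeasurable φ (volume.restrict (Ioc (0:ℝ) a)) := by
    exact (((measurable_id.mul Real.measurable_log).inv).neg).aestronglyMeasurable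
  have hkey : ∀ x ∈ Ioc (0:ℝ) a, 0 < φ x ∧ φ x ≤ 1 / ρ x := by
    intro x hx
    obtain ⟨h1, h2, h3⟩ := phi_le ρ hρ hx.1 (hx.2.trans hac)
    exact ⟨h1, h2⟩
  have hφInt : IntegrableOn φ (Ioc 0 a) := by
    apply MeasureTheory.Integrable.mono hInt' hφmeas
    rw [ae_restrict_iff' measurableSet_Ioc]
    filter_upwards with x hx
    obtain ⟨h1, h2⟩ := hkey x hx
    have h3 : (0:ℝ) < 1 / ρ x := lt_of_lt_of_le h1 h2
    rw [Real.norm_eq_abs, Real.norm_eq_abs, abs_of_pos h1, abs_of_pos h3]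
    exact h2
  set C : ℝ := ∫ x in Ioc (0:ℝ) a, φ x with hC
  -- for every δ ∈ (0, a), ∫ on Ioc δ a equals FF a - FF δ and is ≤ C
  have hbound : ∀ δ ∈ Ioo (0:ℝ) a, FF a - FF δ ≤ C := by
    intro δ hδ
    have hδa : δ ≤ a := hδ.2.le
    have hIcc : ∀ x ∈ Icc δ a, HasDerivAt FF (φ x) x := by
      intro x hx
      exact FF_deriv (lt_of_lt_of_le hδ.1 hx.1) (lt_of_le_of_lt hx.2 ha1)
    have hii : IntervalIntegrable φ volume δ a := by
      rw [intervalIntegrable_iff_integrableOn_Ioc_of_le hδa]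
      exact hφInt.mono_set (Ioc_subset_Ioc_left hδ.1.le)
    have hftc : ∫ x in δ..a, φ x = FF a - FF δ := by
      exact intervalIntegral.integral_eq_sub_of_hasDerivAt
        (fun x hx => hIcc x (by rwa [uIcc_of_le hδa] at hx)) hii
    rw [← hftc, intervalIntegral.integral_of_le hδa]
    apply setIntegral_mono_set hφInt
    · apply (ae_restrict_iff' measurableSet_Ioc).mpr
      filter_upwards with x hx
      exact (hkey x hx).1.le
    · exact (Ioc_subset_Ioc_left hδ.1.le).eventuallyLE
  -- but FF δ → -∞ as δ → 0⁺
  have htend : Filter.Tendsto (fun δ => Real.log (-Real.log δ)) (nhdsWithin 0 (Ioi 0)) Filter.atTop := by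
    apply Real.tendsto_log_atTop.comp
    exact Filter.tendsto_neg_atBot_atTop.comp Real.tendsto_log_nhdsGT_zero
  have hev : ∀ᶠ δ in nhdsWithin (0:ℝ) (Ioi 0),
      Real.log (-Real.log δ) > C - FF a ∧ δ < a := by
    filter_upwards [htend.eventually_gt_atTop (C - FF a),
      eventually_nhdsWithin_of_eventually_nhds (eventually_lt_nhds ha0)] with δ h1 h2
    exact ⟨h1, h2⟩
  obtain ⟨δ, hδ1, hδ2⟩ := (hev.and self_mem_nhdsWithin).exists
  have hδmem : δ ∈ Ioo (0:ℝ) a := ⟨hδ2, hδ1.2⟩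
  have := hbound δ hδmem
  have hFδ : FF δ = -Real.log (-Real.log δ) := rfl
  rw [hFδ] at this
  linarith [hδ1.1]

/-- Properties of `ρ(x) = 1 - m^m` with `m = min(x, 1/e)` (real power,
with `0^0 = 1` so that `ρ 0 = 0`): `ρ` is nondecreasing, continuous and
concave on `[0,∞)`, `ρ 0 = 0`, and `∫_0^ε dx / ρ(x) = ∞` for every `ε > 0`
(expressed as non-integrability of `1/ρ` on `(0,ε]`). -/
theorem rho_example_properties :
    ∀ ρ : ℝ → ℝ,
      (∀ x, ρ x = 1 - (min x (Real.exp 1)⁻¹) ^ (min x (Real.exp 1)⁻¹)) →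
      MonotoneOn ρ (Ici (0 : ℝ)) ∧
      ContinuousOn ρ (Ici (0 : ℝ)) ∧
      ConcaveOn ℝ (Ici (0 : ℝ)) ρ ∧
      ρ 0 = 0 ∧
      ∀ ε > (0 : ℝ), ¬ IntegrableOn (fun x => 1 / ρ x) (Ioc (0 : ℝ) ε) := by
  intro ρ hρ
  have heq := rho_eq ρ hρ
  refine ⟨?_, ?_, ?_, ?_, rho_not_integrable ρ hρ⟩
  · intro x hx y hy hxy
    rw [heq x hx, heq y hy]
    exact g_mono (min_mem x hx) (min_mem y hy) (min_le_min hxy le_rfl)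
  · exact ContinuousOn.congr
      ((g_cont.comp (continuous_id.min continuous_const)).continuousOn)
      (fun x hx => heq x hx)
  · have hf : ConcaveOn ℝ (Ici (0:ℝ)) (fun x : ℝ => min x cC) := by
      have h := (concaveOn_id (𝕜 := ℝ) (convex_Ici (0:ℝ))).inf
        (concaveOn_const (𝕜 := ℝ) cC (convex_Ici (0:ℝ)))
      exact h
    have himg : (fun x : ℝ => min x cC) '' Ici 0 = Icc 0 cC := by
      apply Subset.antisymm
      · rintro y ⟨x, hx, rfl⟩
        exact min_mem x hx
      · intro y hy
        exact ⟨y, hy.1, min_eq_left hy.2⟩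
    have hcomp : ConcaveOn ℝ (Ici (0:ℝ)) (gG ∘ fun x => min x cC) :=
      ConcaveOn.comp (𝕜 := ℝ) (himg ▸ g_concave) hf (himg ▸ g_mono)
    refine ⟨convex_Ici 0, fun x hx y hy a b ha hb hab => ?_⟩
    rw [heq _ hx, heq _ hy, heq _ ((convex_Ici (0:ℝ)) hx hy ha hb hab)]
    exact hcomp.2 hx hy ha hb hab
  · rw [hρ 0]
    have h0 : min (0:ℝ) (Real.exp 1)⁻¹ = 0 := min_eq_left (by positivity)
    rw [h0, Real.rpow_zero]
    ring
end

section
/- There exists a nondecreasing, continuous, concave function ρ : [0,∞) → [0,∞) with ρ(0) = 0 and ∫_0^1 dx/ρ(x) = ∞ such that limsup_{x ↓ 0} ρ(x²)/x > 0; in fact one can achieve limsup_{x↓0} ρ(x)/√x = 1. -/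
open MeasureTheory Set Filter

noncomputable def bseq : ℕ → ℝ
  | 0 => 1
  | n + 1 => bseq n * Real.exp (-1 / bseq n)

lemma bseq_pos : ∀ n, 0 < bseq n := by
  intro n
  induction n with
  | zero => norm_num [bseq]
  | succ n ih => exact mul_pos ih (Real.exp_pos _)

lemma bseq_le_one : ∀ n, bseq n ≤ 1 := by
  intro n
  induction n with
  | zero => norm_num [bseq]
  | succ n ih =>
    have h1 : Real.exp (-1 / bseq n) ≤ 1 := by
      rw [Real.exp_le_one_iff]
      have := bseq_pos n
      exact (div_neg_of_neg_of_pos (by norm_num) this).le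
    calc bseq (n+1) = bseq n * Real.exp (-1 / bseq n) := rfl
      _ ≤ 1 * 1 := mul_le_mul ih h1 (Real.exp_pos _).le one_pos.le
      _ = 1 := by ring

lemma bseq_succ_lt (n : ℕ) : bseq (n + 1) < bseq n := by
  have hb := bseq_pos n
  have h1 : Real.exp (-1 / bseq n) < 1 := by
    rw [Real.exp_lt_one_iff]
    exact div_neg_of_neg_of_pos (by norm_num) hb
  calc bseq (n+1) = bseq n * Real.exp (-1 / bseq n) := rfl
    _ < bseq n * 1 := by nlinarith
    _ = bseq n := by ring

lemma bseq_anti : StrictAnti bseq := strictAnti_nat_of_succ_lt bseq_succ_lt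

lemma bseq_tendsto : Tendsto bseq atTop (nhds 0) := by
  have hgeo : Tendsto (fun n : ℕ => Real.exp (-1) ^ n) atTop (nhds 0) := by
    apply tendsto_pow_atTop_nhds_zero_of_lt_one (Real.exp_pos _).le
    rw [Real.exp_lt_one_iff]; norm_num
  have hle : ∀ n, bseq n ≤ Real.exp (-1) ^ n := by
    intro n
    induction n with
    | zero => norm_num [bseq]
    | succ n ih =>
      have h1 : Real.exp (-1 / bseq n) ≤ Real.exp (-1) := by
        apply Real.exp_le_exp.mpr
        have hb := bseq_pos n
        have hb1 := bseq_le_one n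
        rw [div_le_iff₀ hb]
        nlinarith
      calc bseq (n+1) = bseq n * Real.exp (-1 / bseq n) := rfl
        _ ≤ Real.exp (-1) ^ n * Real.exp (-1) :=
            mul_le_mul ih h1 (Real.exp_pos _).le (by positivity)
        _ = Real.exp (-1) ^ (n+1) := by ring
  exact tendsto_of_tendsto_of_tendsto_of_le_of_le tendsto_const_nhds hgeo
    (fun n => (bseq_pos n).le) hle

lemma bseq_log (n : ℕ) :
    Real.log (bseq n) - Real.log (bseq (n + 1)) = 1 / bseq n := by
  have hb := bseq_pos n
  have : Real.log (bseq (n+1)) = Real.log (bseq n) + (-1 / bseq n) := by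
    rw [show bseq (n+1) = bseq n * Real.exp (-1 / bseq n) from rfl,
      Real.log_mul hb.ne' (Real.exp_pos _).ne', Real.log_exp]
  rw [this]; ring

noncomputable def aseq (n : ℕ) : ℝ := bseq n ^ 2

lemma aseq_pos (n : ℕ) : 0 < aseq n := pow_pos (bseq_pos n) 2

lemma aseq_zero : aseq 0 = 1 := by norm_num [aseq, bseq]

lemma aseq_anti : StrictAnti aseq := by
  intro m n h
  have := bseq_anti h
  have := bseq_pos n
  have := bseq_pos m
  simp only [aseq]
  nlinarith

lemma aseq_le_one (n : ℕ) : aseq n ≤ 1 := by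
  have := bseq_le_one n; have := bseq_pos n
  simp only [aseq]; nlinarith

lemma sqrt_aseq (n : ℕ) : Real.sqrt (aseq n) = bseq n :=
  Real.sqrt_sq (bseq_pos n).le

lemma aseq_tendsto : Tendsto aseq atTop (nhds 0) := by
  have h : ∀ n, aseq n ≤ bseq n := by
    intro n; have := bseq_pos n; have := bseq_le_one n
    simp only [aseq]; nlinarith
  exact tendsto_of_tendsto_of_tendsto_of_le_of_le tendsto_const_nhds bseq_tendsto
    (fun n => (aseq_pos n).le) h

/-- The secant line of `√x` through `(aseq (n+1), bseq (n+1))` and `(aseq n, bseq n)`. -/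
noncomputable def lin (n : ℕ) (x : ℝ) : ℝ :=
  bseq (n + 1) + (x - aseq (n + 1)) / (bseq n + bseq (n + 1))

lemma csum_pos (n : ℕ) : 0 < bseq n + bseq (n + 1) :=
  add_pos (bseq_pos n) (bseq_pos (n+1))

lemma lin_eq (n : ℕ) {x : ℝ} (hx : 0 ≤ x) :
    lin n x = Real.sqrt x +
      (Real.sqrt x - bseq n) * (Real.sqrt x - bseq (n + 1)) / (bseq n + bseq (n + 1)) := by
  have h : Real.sqrt x ^ 2 = x := Real.sq_sqrt hx
  have hc := (csum_pos n).ne'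
  rw [lin, aseq]
  field_simp
  linear_combination -h

lemma lin_mono (n : ℕ) : Monotone (lin n) := by
  intro x y hxy
  have hc := csum_pos n
  simp only [lin]
  have h : (x - aseq (n+1)) / (bseq n + bseq (n+1)) ≤ (y - aseq (n+1)) / (bseq n + bseq (n+1)) :=
    div_le_div_of_nonneg_right (by linarith) hc.le
  linarith

lemma lin_ge_sqrt (n : ℕ) {x : ℝ} (hx : 0 ≤ x)
    (h : Real.sqrt x ≤ bseq (n + 1) ∨ bseq n ≤ Real.sqrt x) :
    Real.sqrt x ≤ lin n x := by
  rw [lin_eq n hx]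
  have hc := csum_pos n
  have hmono := (bseq_succ_lt n).le
  have key : 0 ≤ (Real.sqrt x - bseq n) * (Real.sqrt x - bseq (n + 1)) := by
    rcases h with h | h
    · nlinarith
    · exact mul_nonneg (by linarith) (by linarith)
  have := div_nonneg key hc.le
  linarith

lemma lin_le_sqrt (n : ℕ) {x : ℝ} (hx : 0 ≤ x)
    (h1 : bseq (n + 1) ≤ Real.sqrt x) (h2 : Real.sqrt x ≤ bseq n) :
    lin n x ≤ Real.sqrt x := by
  rw [lin_eq n hx]
  have hc := csum_pos n
  have key : (Real.sqrt x - bseq n) * (Real.sqrt x - bseq (n + 1)) ≤ 0 :=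
    mul_nonpos_of_nonpos_of_nonneg (by linarith) (by linarith)
  have := div_nonpos_of_nonpos_of_nonneg key hc.le
  linarith

lemma lin_nonneg (n : ℕ) {x : ℝ} (hx : 0 ≤ x) : 0 ≤ lin n x := by
  rcases le_or_gt (Real.sqrt x) (bseq (n+1)) with h | h
  · have := lin_ge_sqrt n hx (Or.inl h)
    have := Real.sqrt_nonneg x
    linarith
  · have h' : aseq (n+1) ≤ x := by
      have := Real.sqrt_nonneg x
      have : bseq (n+1) ^ 2 ≤ Real.sqrt x ^ 2 := by nlinarith [bseq_pos (n+1)]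
      rw [Real.sq_sqrt hx] at this
      simpa [aseq] using this
    have hc := csum_pos n
    have h0 : 0 ≤ (x - aseq (n+1)) / (bseq n + bseq (n+1)) :=
      div_nonneg (by linarith) hc.le
    have := bseq_pos (n+1)
    simp only [lin]
    linarith

noncomputable def rho (x : ℝ) : ℝ := ⨅ n, lin n x

lemma rho_bdd {x : ℝ} (hx : 0 ≤ x) : BddBelow (Set.range fun n => lin n x) :=
  ⟨0, fun y ⟨n, hn⟩ => hn ▸ lin_nonneg n hx⟩

lemma rho_le_lin (n : ℕ) {x : ℝ} (hx : 0 ≤ x) : rho x ≤ lin n x :=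
  ciInf_le (rho_bdd hx) n

lemma rho_nonneg {x : ℝ} (hx : 0 ≤ x) : 0 ≤ rho x :=
  le_ciInf fun n => lin_nonneg n hx

lemma exists_block {x : ℝ} (hx : 0 < x) (hx1 : x ≤ 1) :
    ∃ n, aseq (n + 1) ≤ x ∧ x ≤ aseq n := by
  have hex : ∃ n, aseq n < x :=
    ((aseq_tendsto.eventually (tendsto_id.eventually_lt_const hx)).exists)
  classical
  have h0 : ¬ aseq 0 < x := by rw [aseq_zero]; linarith
  rcases Nat.find_spec hex, Nat.find_min hex with ⟨hspec, hmin⟩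
  cases hm : Nat.find hex with
  | zero => exact absurd (hm ▸ hspec) h0
  | succ n =>
    refine ⟨n, (hm ▸ hspec).le, ?_⟩
    have := Nat.find_min hex (m := n) (by omega)
    linarith

lemma sqrt_mem_block {x : ℝ} {n : ℕ} (h1 : aseq (n + 1) ≤ x) (h2 : x ≤ aseq n) :
    bseq (n + 1) ≤ Real.sqrt x ∧ Real.sqrt x ≤ bseq n := by
  constructor
  · rw [← sqrt_aseq (n+1)]; exact Real.sqrt_le_sqrt h1
  · rw [← sqrt_aseq n]; exact Real.sqrt_le_sqrt h2

lemma rho_le_sqrt {x : ℝ} (hx : 0 < x) (hx1 : x ≤ 1) : rho x ≤ Real.sqrt x := by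
  obtain ⟨n, h1, h2⟩ := exists_block hx hx1
  obtain ⟨hs1, hs2⟩ := sqrt_mem_block h1 h2
  exact (rho_le_lin n hx.le).trans (lin_le_sqrt n hx.le hs1 hs2)

lemma lin_ge_block {x : ℝ} {n m : ℕ} (h1 : aseq (n + 1) ≤ x) (h2 : x ≤ aseq n) :
    bseq (n + 1) ≤ lin m x := by
  have hx : (0:ℝ) ≤ x := (aseq_pos (n+1)).le.trans h1
  obtain ⟨hs1, hs2⟩ := sqrt_mem_block h1 h2
  rcases le_or_gt (Real.sqrt x) (bseq (m + 1)) with h | h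
  · exact hs1.trans (lin_ge_sqrt m hx (Or.inl h))
  rcases le_or_gt (bseq m) (Real.sqrt x) with h' | h'
  · exact hs1.trans (lin_ge_sqrt m hx (Or.inr h'))
  -- now bseq (m+1) < √x < bseq m, so m = n
  have hmn : m = n := by
    by_contra hne
    rcases Nat.lt_or_ge m n with hlt | hge
    · have : bseq n ≤ bseq (m + 1) := bseq_anti.antitone (by omega)
      linarith
    · have : bseq m ≤ bseq (n + 1) := bseq_anti.antitone (by omega)
      linarith
  subst hmn
  have hc := csum_pos m
  have h0 : 0 ≤ (x - aseq (m+1)) / (bseq m + bseq (m+1)) :=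
    div_nonneg (by linarith) hc.le
  simp only [lin]; linarith

lemma rho_ge_block {x : ℝ} {n : ℕ} (h1 : aseq (n + 1) ≤ x) (h2 : x ≤ aseq n) :
    bseq (n + 1) ≤ rho x :=
  le_ciInf fun m => lin_ge_block h1 h2

lemma rho_pos {x : ℝ} (hx : 0 < x) (hx1 : x ≤ 1) : 0 < rho x := by
  obtain ⟨n, h1, h2⟩ := exists_block hx hx1
  exact lt_of_lt_of_le (bseq_pos (n+1)) (rho_ge_block h1 h2)

lemma lin_at_node (n : ℕ) : lin n (aseq n) = bseq n := by
  have hc := (csum_pos n).ne'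
  have hb1 := bseq_pos n
  have hb2 := bseq_pos (n+1)
  simp only [lin, aseq]
  field_simp
  ring

lemma lin_at_node' (n : ℕ) : lin n (aseq (n + 1)) = bseq (n + 1) := by
  simp [lin]

lemma rho_at_node (n : ℕ) : rho (aseq n) = bseq n := by
  refine le_antisymm ((rho_le_lin n (aseq_pos n).le).trans_eq (lin_at_node n))
    (le_ciInf fun m => ?_)
  have hdisj : Real.sqrt (aseq n) ≤ bseq (m + 1) ∨ bseq m ≤ Real.sqrt (aseq n) := by
    rw [sqrt_aseq n]
    rcases Nat.lt_or_ge n (m + 1) with h | h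
    · exact Or.inr (bseq_anti.antitone (by omega))
    · exact Or.inl (bseq_anti.antitone h)
  have h := lin_ge_sqrt m (aseq_pos n).le hdisj
  rwa [sqrt_aseq n] at h

lemma rho_zero : rho 0 = 0 := by
  refine le_antisymm ?_ (rho_nonneg le_rfl)
  have hle : ∀ n, rho 0 ≤ bseq (n + 1) := by
    intro n
    have hc := csum_pos n
    have hb1 := bseq_pos n
    have hb2 := bseq_pos (n+1)
    have := rho_le_lin n (le_refl (0:ℝ))
    have hlin : lin n 0 ≤ bseq (n + 1) := by
      simp only [lin, aseq]
      have : (0 - bseq (n+1)^2) / (bseq n + bseq (n+1)) ≤ 0 :=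
        div_nonpos_of_nonpos_of_nonneg (by nlinarith) hc.le
      linarith
    linarith
  have : Tendsto (fun n => bseq (n + 1)) atTop (nhds 0) :=
    bseq_tendsto.comp (tendsto_add_atTop_nat 1)
  exact ge_of_tendsto' this hle

lemma rho_monotoneOn : MonotoneOn rho (Ici (0:ℝ)) := by
  intro x hx y hy hxy
  exact le_ciInf fun n => (rho_le_lin n hx).trans (lin_mono n hxy)

lemma rho_concaveOn : ConcaveOn ℝ (Ici (0:ℝ)) rho := by
  refine ⟨convex_Ici 0, ?_⟩
  intro x hx y hy p q hp hq hpq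
  have hxy : (0:ℝ) ≤ p • x + q • y := by
    simp only [smul_eq_mul]
    have : (0:ℝ) ≤ x := hx
    have : (0:ℝ) ≤ y := hy
    nlinarith
  refine le_ciInf fun n => ?_
  have hlin : lin n (p • x + q • y) = p * lin n x + q * lin n y := by
    simp only [lin, smul_eq_mul]
    have hc := (csum_pos n).ne'
    field_simp
    linear_combination (aseq (n+1) - bseq (n+1) * (bseq n + bseq (n+1))) * hpq
  rw [hlin]
  have h1 : rho x ≤ lin n x := rho_le_lin n hx
  have h2 : rho y ≤ lin n y := rho_le_lin n hy
  have := mul_le_mul_of_nonneg_left h1 hp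
  have := mul_le_mul_of_nonneg_left h2 hq
  simp only [smul_eq_mul]
  linarith

lemma rho_continuousOn : ContinuousOn rho (Ici (0:ℝ)) := by
  have hIoi : ContinuousOn rho (Ioi (0:ℝ)) :=
    (rho_concaveOn.subset Ioi_subset_Ici_self (convex_Ioi 0)).continuousOn isOpen_Ioi
  intro x hx
  rcases eq_or_lt_of_le (show (0:ℝ) ≤ x from hx) with h0 | h0
  · -- continuity at 0 within Ici 0 by squeeze
    subst h0
    rw [ContinuousWithinAt, rho_zero]
    have hup : ∀ᶠ y in nhdsWithin 0 (Ici (0:ℝ)), rho y ≤ Real.sqrt y := by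
      filter_upwards [mem_nhdsWithin_of_mem_nhds (Ioo_mem_nhds (by norm_num : (-1:ℝ) < 0) (by norm_num : (0:ℝ) < 1)),
        self_mem_nhdsWithin] with y hy hy'
      rcases eq_or_lt_of_le (show (0:ℝ) ≤ y from hy') with h | h
      · rw [← h, rho_zero, Real.sqrt_zero]
      · exact rho_le_sqrt h hy.2.le
    have hlo : ∀ᶠ y in nhdsWithin 0 (Ici (0:ℝ)), 0 ≤ rho y := by
      filter_upwards [self_mem_nhdsWithin] with y hy
      exact rho_nonneg hy
    have hsq : Tendsto (fun y => Real.sqrt y) (nhdsWithin 0 (Ici (0:ℝ))) (nhds 0) := by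
      have h := (Real.continuous_sqrt.tendsto 0).mono_left
        (nhdsWithin_le_nhds (s := Ici (0:ℝ)))
      simpa using h
    exact tendsto_of_tendsto_of_tendsto_of_le_of_le' tendsto_const_nhds hsq hlo hup
  · exact (hIoi.continuousAt (Ioi_mem_nhds h0)).continuousWithinAt

lemma rho_eventually_le : ∀ᶠ x in nhdsWithin 0 (Ioi (0:ℝ)), rho x / Real.sqrt x ≤ 1 := by
  filter_upwards [Ioc_mem_nhdsGT (by norm_num : (0:ℝ) < 1)] with x hx
  rw [div_le_one (Real.sqrt_pos.mpr hx.1)]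
  exact rho_le_sqrt hx.1 hx.2

lemma rho_frequently_ge : ∃ᶠ x in nhdsWithin 0 (Ioi (0:ℝ)), 1 ≤ rho x / Real.sqrt x := by
  have htend : Tendsto aseq atTop (nhdsWithin 0 (Ioi (0:ℝ))) :=
    tendsto_nhdsWithin_of_tendsto_nhds_of_eventually_within _ aseq_tendsto
      (Eventually.of_forall fun n => aseq_pos n)
  refine htend.frequently (Frequently.of_forall fun n => ?_)
  rw [rho_at_node, sqrt_aseq, div_self (bseq_pos n).ne']

lemma rho_limsup :
    limsup (fun x => rho x / Real.sqrt x) (nhdsWithin 0 (Ioi (0:ℝ))) = 1 := by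
  refine le_antisymm ?_ ?_
  · exact limsup_le_of_le (IsCoboundedUnder.of_frequently_ge rho_frequently_ge)
      rho_eventually_le
  · exact le_limsup_of_frequently_le rho_frequently_ge
      (isBoundedUnder_of_eventually_le rho_eventually_le)

lemma lin_pos_on {n : ℕ} {x : ℝ} (h1 : aseq (n + 1) ≤ x) : 0 < lin n x := by
  have h := lin_mono n h1
  rw [lin_at_node'] at h
  exact lt_of_lt_of_le (bseq_pos (n+1)) h

lemma lin_continuous (n : ℕ) : Continuous (lin n) := by
  show Continuous fun x => bseq (n+1) + (x - aseq (n+1)) / (bseq n + bseq (n+1))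
  exact continuous_const.add ((continuous_id.sub continuous_const).div_const _)

lemma one_div_lin_intervalIntegrable (n : ℕ) :
    IntervalIntegrable (fun x => 1 / lin n x) volume (aseq (n + 1)) (aseq n) := by
  apply ContinuousOn.intervalIntegrable
  apply continuousOn_const.div (lin_continuous n).continuousOn
  intro x hx
  rw [uIcc_of_le (aseq_anti n.lt_succ_self).le] at hx
  exact (lin_pos_on hx.1).ne'

lemma block_integral (n : ℕ) :
    ∫ x in (aseq (n + 1))..(aseq n), 1 / lin n x
      = (bseq n + bseq (n + 1)) * (1 / bseq n) := by
  have hc := csum_pos n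
  have hderiv : ∀ x ∈ uIcc (aseq (n + 1)) (aseq n),
      HasDerivAt (fun y => (bseq n + bseq (n + 1)) * Real.log (lin n y)) (1 / lin n x) x := by
    intro x hx
    rw [uIcc_of_le (aseq_anti n.lt_succ_self).le] at hx
    have hpos : 0 < lin n x := lin_pos_on hx.1
    have hL : HasDerivAt (lin n) (1 / (bseq n + bseq (n + 1))) x := by
      have := (((hasDerivAt_id x).sub_const (aseq (n + 1))).div_const
        (bseq n + bseq (n + 1))).const_add (bseq (n + 1))
      exact this
    have hlog : HasDerivAt (fun y => Real.log (lin n y))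
        ((lin n x)⁻¹ * (1 / (bseq n + bseq (n + 1)))) x :=
      (Real.hasDerivAt_log hpos.ne').comp x hL
    have h2 := hlog.const_mul (bseq n + bseq (n + 1))
    rw [show (bseq n + bseq (n + 1)) * ((lin n x)⁻¹ * (1 / (bseq n + bseq (n + 1))))
        = 1 / lin n x by
      rw [one_div, one_div, ← mul_assoc, mul_comm (bseq n + bseq (n + 1)), mul_assoc,
        mul_inv_cancel₀ hc.ne', mul_one]] at h2
    exact h2
  rw [intervalIntegral.integral_eq_sub_of_hasDerivAt hderiv
    (one_div_lin_intervalIntegrable n), lin_at_node, lin_at_node',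
    ← mul_sub, bseq_log n]

lemma block_one_le (n : ℕ)
    (h : IntegrableOn (fun x => 1 / rho x) (Ioc (0:ℝ) 1)) :
    (1:ℝ) ≤ ∫ x in Ioc (aseq (n + 1)) (aseq n), 1 / rho x := by
  have hsub : Ioc (aseq (n + 1)) (aseq n) ⊆ Ioc (0:ℝ) 1 :=
    Ioc_subset_Ioc (aseq_pos (n+1)).le (aseq_le_one n)
  have hmono : ∫ x in Ioc (aseq (n + 1)) (aseq n), 1 / lin n x
      ≤ ∫ x in Ioc (aseq (n + 1)) (aseq n), 1 / rho x := by
    apply setIntegral_mono_on (one_div_lin_intervalIntegrable n).1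
      (h.mono_set hsub) measurableSet_Ioc
    intro x hx
    have hx1 : 0 < x := (aseq_pos (n+1)).trans hx.1
    have hxle : x ≤ 1 := hx.2.trans (aseq_le_one n)
    exact one_div_le_one_div_of_le (rho_pos hx1 hxle) (rho_le_lin n hx1.le)
  have hval : ∫ x in Ioc (aseq (n + 1)) (aseq n), 1 / lin n x
      = (bseq n + bseq (n + 1)) * (1 / bseq n) := by
    rw [← intervalIntegral.integral_of_le (aseq_anti n.lt_succ_self).le]
    exact block_integral n
  have hge : (1:ℝ) ≤ (bseq n + bseq (n + 1)) * (1 / bseq n) := by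
    have h1 := bseq_pos n
    have h2 := bseq_pos (n+1)
    rw [mul_one_div, le_div_iff₀ h1]
    linarith
  linarith [hmono, hval ▸ hge]

lemma partial_sums (h : IntegrableOn (fun x => 1 / rho x) (Ioc (0:ℝ) 1)) :
    ∀ N : ℕ, (N : ℝ) ≤ ∫ x in Ioc (aseq N) 1, 1 / rho x := by
  intro N
  induction N with
  | zero => simp [aseq_zero]
  | succ N ih =>
    have h1 : aseq (N + 1) ≤ aseq N := (aseq_anti N.lt_succ_self).le
    have h2 : aseq N ≤ 1 := aseq_le_one N
    have hunion : Ioc (aseq (N + 1)) (aseq N) ∪ Ioc (aseq N) 1 = Ioc (aseq (N + 1)) 1 :=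
      Ioc_union_Ioc_eq_Ioc h1 h2
    have hsub1 : Ioc (aseq (N + 1)) (aseq N) ⊆ Ioc (0:ℝ) 1 :=
      Ioc_subset_Ioc (aseq_pos (N+1)).le h2
    have hsub2 : Ioc (aseq N) 1 ⊆ Ioc (0:ℝ) 1 := Ioc_subset_Ioc (aseq_pos N).le le_rfl
    rw [← hunion, setIntegral_union (Ioc_disjoint_Ioc_of_le le_rfl) measurableSet_Ioc
      (h.mono_set hsub1) (h.mono_set hsub2)]
    push_cast
    linarith [block_one_le N h, ih]

lemma rho_not_integrable_s7 :
    ¬ IntegrableOn (fun x => 1 / rho x) (Ioc (0:ℝ) 1) := by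
  intro h
  obtain ⟨N, hN⟩ := exists_nat_gt (∫ x in Ioc (0:ℝ) 1, 1 / rho x)
  have hle : ∫ x in Ioc (aseq N) 1, 1 / rho x ≤ ∫ x in Ioc (0:ℝ) 1, 1 / rho x := by
    apply setIntegral_mono_set h
    · rw [EventuallyLE]
      refine (ae_restrict_iff' measurableSet_Ioc).mpr (ae_of_all _ fun x hx => ?_)
      exact one_div_nonneg.mpr (rho_pos hx.1 hx.2).le
    · exact (Ioc_subset_Ioc (aseq_pos N).le le_rfl).eventuallyLE
  linarith [partial_sums h N]

/-- There exists a nondecreasing, continuous, concave `ρ : [0,∞) → [0,∞)` with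
`ρ 0 = 0` and `∫_0^1 dx/ρ(x) = ∞` (non-integrability of `1/ρ` on `(0,1]`),
such that `limsup_{x↓0} ρ(x)/√x = 1` (in particular
`limsup_{x↓0} ρ(x²)/x > 0`). -/
theorem exists_rho_failing_A4 :
    ∃ ρ : ℝ → ℝ,
      MonotoneOn ρ (Ici (0 : ℝ)) ∧
      ContinuousOn ρ (Ici (0 : ℝ)) ∧
      ConcaveOn ℝ (Ici (0 : ℝ)) ρ ∧
      (∀ x ∈ Ici (0 : ℝ), 0 ≤ ρ x) ∧
      ρ 0 = 0 ∧
      ¬ IntegrableOn (fun x => 1 / ρ x) (Ioc (0 : ℝ) 1) ∧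
      limsup (fun x => ρ x / Real.sqrt x) (nhdsWithin 0 (Ioi (0 : ℝ))) = 1 := by
  exact ⟨rho, rho_monotoneOn, rho_continuousOn, rho_concaveOn,
    fun x hx => rho_nonneg hx, rho_zero, rho_not_integrable_s7, rho_limsup⟩
end
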